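/- Let A = ℤ⟨X,Y⟩ and p = 2. If (x₀,x₁,x₂,...) lies in the topological closure of [X(A),X(A)], then x₁ ∈ H := A₄⁰ + F⁵A + 2A. -/

import Mathlib

/-- Verschiebung operator: `V(a₀,a₁,...) = p·(0,a₀,a₁,...)`. -/
def Vb (p : ℕ) {A : Type*} [Ring A] (a : ℕ → A) : ℕ → A
  | 0 => 0
  | n + 1 => (p : A) * a n

/-- Teichmüller element: `⟨a⟩ = (a, a^p, a^{p²}, ...)`. -/
def tm (p : ℕ) {A : Type*} [Ring A] (a : A) : ℕ → A := fun n => a ^ p ^ n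

/-- Generators of `X(A)`: all `V^m(⟨a₁⟩⋯⟨a_r⟩)` with `m ∈ ℕ₀`, `r ≥ 1`, `aᵢ ∈ A`. -/
def XAgen (p : ℕ) (A : Type*) [Ring A] : Set (ℕ → A) :=
  {x | ∃ (m : ℕ) (l : List A), l ≠ [] ∧ x = (Vb p)^[m] ((l.map (tm p)).prod)}

/-- `X(A)`: the topological closure of the additive subgroup generated by `XAgen`. -/
noncomputable def XA (p : ℕ) (A : Type*) [Ring A] [TopologicalSpace A] [DiscreteTopology A] :
    AddSubgroup (ℕ → A) :=
  (AddSubgroup.closure (XAgen p A)).topologicalClosure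

/-- The set of commutators `xy − yx` with `x, y ∈ X(A)`. -/
def commXA (p : ℕ) (A : Type*) [Ring A] [TopologicalSpace A] [DiscreteTopology A] :
    Set (ℕ → A) :=
  {z | ∃ x ∈ XA p A, ∃ y ∈ XA p A, z = x * y - y * x}

/-- Words in the two letters `X, Y`. -/
abbrev FW := FreeMonoid (Fin 2)

/-- `A = ℤ⟨X,Y⟩`. -/
abbrev A2 := MonoidAlgebra ℤ FW

instance : TopologicalSpace A2 := ⊥
instance : DiscreteTopology A2 := ⟨rfl⟩

/-- The word `XYXY`. -/
def wXYXY : FW := FreeMonoid.of 0 * FreeMonoid.of 1 * FreeMonoid.of 0 * FreeMonoid.of 1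

/-- The word `YXYX`. -/
def wYXYX : FW := FreeMonoid.of 1 * FreeMonoid.of 0 * FreeMonoid.of 1 * FreeMonoid.of 0

/-- Generators of `A₄⁰`: all words of length `4` except `XYXY` and `YXYX`. -/
def A40set : Set A2 :=
  {x | ∃ w : FW, w.length = 4 ∧ w ≠ wXYXY ∧ w ≠ wYXYX ∧ x = MonoidAlgebra.of ℤ FW w}

/-- The words of length `≥ n`; they generate `FⁿA = ⊕_{i≥n} A_i` as an additive group. -/
def FdegSet (n : ℕ) : Set A2 :=
  {x | ∃ w : FW, n ≤ w.length ∧ x = MonoidAlgebra.of ℤ FW w}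

/-- The set `2A`. -/
def twoA : Set A2 := {x | ∃ a : A2, x = 2 * a}

/-- `H := A₄⁰ + F⁵A + 2A`, as the additive subgroup generated by the union. -/
noncomputable def Hsub : AddSubgroup A2 := AddSubgroup.closure (A40set ∪ FdegSet 5 ∪ twoA)

/-! ### Auxiliary material -/

instance : DecidableEq FW := inferInstanceAs (DecidableEq (List (Fin 2)))

instance : CoeFun A2 (fun _ => FW → ℤ) := ⟨fun z => ⇑z.coeff⟩

/-- Coefficient of a word in a product, as a sum over the splittings of the word. -/
lemma mul_apply_word (f g : A2) (l : List (Fin 2)) :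
    (f * g) (FreeMonoid.ofList l) =
      ∑ i ∈ Finset.range (l.length + 1),
        f (FreeMonoid.ofList (l.take i)) * g (FreeMonoid.ofList (l.drop i)) := by
  have hs : ∀ {p : FW × FW}, p ∈ (Finset.range (l.length + 1)).image
      (fun i => ((FreeMonoid.ofList (l.take i) : FW), (FreeMonoid.ofList (l.drop i) : FW))) ↔
      p.1 * p.2 = FreeMonoid.ofList l := by
    intro p
    constructor
    · intro hp
      simp only [Finset.mem_image, Finset.mem_range] at hp
      obtain ⟨i, _, rfl⟩ := hp
      show FreeMonoid.ofList (l.take i) * FreeMonoid.ofList (l.drop i) = _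
      rw [← FreeMonoid.ofList_append, List.take_append_drop]
    · intro hp
      simp only [Finset.mem_image, Finset.mem_range]
      have h1 : (FreeMonoid.toList p.1) ++ (FreeMonoid.toList p.2) = l := by
        rw [← FreeMonoid.toList_mul, hp, FreeMonoid.toList_ofList]
      refine ⟨(FreeMonoid.toList p.1).length, ?_, ?_⟩
      · have := congrArg List.length h1
        simp only [List.length_append] at this
        omega
      · have ht : l.take (FreeMonoid.toList p.1).length = FreeMonoid.toList p.1 := by
          rw [← h1, List.take_left]
        have hd : l.drop (FreeMonoid.toList p.1).length = FreeMonoid.toList p.2 := by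
          rw [← h1, List.drop_left]
        rw [ht, hd, FreeMonoid.ofList_toList, FreeMonoid.ofList_toList]
  rw [MonoidAlgebra.mul_apply_antidiagonal f g _ _ hs]
  rw [Finset.sum_image]
  intro i hi j hj h
  simp only [Finset.coe_range, Set.mem_Iio] at hi hj
  have := congrArg (fun q => (FreeMonoid.toList q.1).length) h
  simp only [FreeMonoid.toList_ofList, List.length_take] at this
  omega

/-- The subgroup of elements whose coefficients at the two length-one words are even. -/
noncomputable def Qsub : AddSubgroup A2 where
  carrier := {z | ∀ g : Fin 2, (2:ℤ) ∣ z (FreeMonoid.of g)}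
  zero_mem' := by intro g; simp
  add_mem' := by
    intro a b ha hb g
    rw [MonoidAlgebra.coeff_add, Finsupp.add_apply]
    exact dvd_add (ha g) (hb g)
  neg_mem' := by
    intro a ha g
    rw [MonoidAlgebra.coeff_neg, Finsupp.neg_apply]
    exact Dvd.dvd.neg_right (ha g)

lemma of_eq_ofList (g : Fin 2) : FreeMonoid.of g = FreeMonoid.ofList [g] := rfl

lemma one_mem_Qsub : (1 : A2) ∈ Qsub := by
  intro g
  have : ((1 : A2)) (FreeMonoid.of g) = 0 := by
    rw [MonoidAlgebra.one_def, MonoidAlgebra.coeff_single]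
    apply Finsupp.single_eq_of_ne
    intro h
    have := congrArg FreeMonoid.length h
    simp [FreeMonoid.length_one, FreeMonoid.length_of] at this
  rw [this]
  exact dvd_zero 2

lemma mul_mem_Qsub {a b : A2} (ha : a ∈ Qsub) (hb : b ∈ Qsub) : a * b ∈ Qsub := by
  intro g
  rw [of_eq_ofList, mul_apply_word]
  norm_num [Finset.sum_range_succ]
  exact dvd_add (Dvd.dvd.mul_left (hb g) _) (Dvd.dvd.mul_right (ha g) _)

lemma sq_mem_Qsub (a : A2) : a * a ∈ Qsub := by
  intro g
  rw [of_eq_ofList, mul_apply_word]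
  norm_num [Finset.sum_range_succ]
  exact ⟨a 1 * a (FreeMonoid.of g), by ring⟩

lemma prod_sq_mem_Qsub (l : List A2) : (l.map (fun a => a * a)).prod ∈ Qsub := by
  induction l with
  | nil => simpa using one_mem_Qsub
  | cons h t ih =>
    simp only [List.map_cons, List.prod_cons]
    exact mul_mem_Qsub (sq_mem_Qsub h) ih

lemma two_mul_mem_Qsub (c : A2) : (2 : A2) * c ∈ Qsub := by
  intro g
  rw [two_mul, MonoidAlgebra.coeff_add, Finsupp.add_apply]
  exact ⟨c (FreeMonoid.of g), by ring⟩

/-- The subgroup of elements whose coefficients at all "bad" words are even. -/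
noncomputable def Hp : AddSubgroup A2 where
  carrier := {z | ∀ w : FW, (w.length ≤ 3 ∨ w = wXYXY ∨ w = wYXYX) → (2:ℤ) ∣ z w}
  zero_mem' := by intro w _; simp
  add_mem' := by
    intro a b ha hb w hw
    rw [MonoidAlgebra.coeff_add, Finsupp.add_apply]
    exact dvd_add (ha w hw) (hb w hw)
  neg_mem' := by
    intro a ha w hw
    rw [MonoidAlgebra.coeff_neg, Finsupp.neg_apply]
    exact Dvd.dvd.neg_right (ha w hw)

lemma toList_length (w : FW) : (FreeMonoid.toList w).length = w.length := rfl

/-- Key computation: commutators of elements of `Qsub` lie in `Hp`. -/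
lemma comm_mem_Hp {a b : A2} (ha : a ∈ Qsub) (hb : b ∈ Qsub) : a * b - b * a ∈ Hp := by
  have key : ∀ l : List (Fin 2), (l.length ≤ 3 ∨ l = [0,1,0,1] ∨ l = [1,0,1,0]) →
      (2:ℤ) ∣ (a * b - b * a) (FreeMonoid.ofList l) := by
    intro l hl
    rw [MonoidAlgebra.coeff_sub, Finsupp.sub_apply, mul_apply_word, mul_apply_word]
    have ha' : ∀ g : Fin 2, (2:ℤ) ∣ a (FreeMonoid.of g) := fun g => ha g
    have hb' : ∀ g : Fin 2, (2:ℤ) ∣ b (FreeMonoid.of g) := fun g => hb g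
    rcases hl with hlen | hl | hl
    · match l, hlen with
      | [], _ =>
        norm_num [Finset.sum_range_succ]
        exact ⟨0, by ring⟩
      | [g1], _ =>
        norm_num [Finset.sum_range_succ]
        exact ⟨0, by ring⟩
      | [g1, g2], _ =>
        obtain ⟨x1, hx1⟩ := ha' g1
        obtain ⟨y1, hy1⟩ := hb' g1
        norm_num [Finset.sum_range_succ]
        rw [hx1, hy1]
        exact ⟨x1 * b (FreeMonoid.of g2) - y1 * a (FreeMonoid.of g2), by ring⟩
      | [g1, g2, g3], _ =>
        obtain ⟨x1, hx1⟩ := ha' g1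
        obtain ⟨y1, hy1⟩ := hb' g1
        obtain ⟨x3, hx3⟩ := ha' g3
        obtain ⟨y3, hy3⟩ := hb' g3
        norm_num [Finset.sum_range_succ]
        rw [hx1, hy1, hx3, hy3]
        exact ⟨x1 * b (FreeMonoid.of g2 * FreeMonoid.of g3)
          + a (FreeMonoid.of g1 * FreeMonoid.of g2) * y3
          - y1 * a (FreeMonoid.of g2 * FreeMonoid.of g3)
          - b (FreeMonoid.of g1 * FreeMonoid.of g2) * x3, by ring⟩
    · subst hl
      obtain ⟨x0, hx0⟩ := ha' 0
      obtain ⟨y0, hy0⟩ := hb' 0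
      obtain ⟨x1, hx1⟩ := ha' 1
      obtain ⟨y1, hy1⟩ := hb' 1
      norm_num [Finset.sum_range_succ]
      rw [hx0, hy0, hx1, hy1]
      exact ⟨x0 * b (FreeMonoid.of 1 * (FreeMonoid.of 0 * FreeMonoid.of 1))
        + a (FreeMonoid.of 0 * (FreeMonoid.of 1 * FreeMonoid.of 0)) * y1
        - y0 * a (FreeMonoid.of 1 * (FreeMonoid.of 0 * FreeMonoid.of 1))
        - b (FreeMonoid.of 0 * (FreeMonoid.of 1 * FreeMonoid.of 0)) * x1, by ring⟩
    · subst hl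
      obtain ⟨x0, hx0⟩ := ha' 0
      obtain ⟨y0, hy0⟩ := hb' 0
      obtain ⟨x1, hx1⟩ := ha' 1
      obtain ⟨y1, hy1⟩ := hb' 1
      norm_num [Finset.sum_range_succ]
      rw [hx0, hy0, hx1, hy1]
      exact ⟨x1 * b (FreeMonoid.of 0 * (FreeMonoid.of 1 * FreeMonoid.of 0))
        + a (FreeMonoid.of 1 * (FreeMonoid.of 0 * FreeMonoid.of 1)) * y0
        - y1 * a (FreeMonoid.of 0 * (FreeMonoid.of 1 * FreeMonoid.of 0))
        - b (FreeMonoid.of 1 * (FreeMonoid.of 0 * FreeMonoid.of 1)) * x0, by ring⟩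
  intro w hw
  have hw' : w = FreeMonoid.ofList (FreeMonoid.toList w) := rfl
  rw [hw']
  apply key
  rcases hw with h | h | h
  · left; rw [toList_length]; exact h
  · right; left; rw [h]; rfl
  · right; right; rw [h]; rfl

/-- `Hp` is contained in `Hsub`. -/
lemma Hp_le_Hsub {z : A2} (hz : z ∈ Hp) : z ∈ Hsub := by
  have hrepr : z = ∑ w ∈ z.coeff.support, (MonoidAlgebra.single w (z w) : A2) := by
    conv_lhs => rw [← MonoidAlgebra.sum_coeff_single z]
    rfl
  rw [hrepr]
  apply AddSubgroup.sum_mem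
  intro w _
  by_cases hbad : w.length ≤ 3 ∨ w = wXYXY ∨ w = wYXYX
  · obtain ⟨c, hc⟩ := hz w hbad
    have h2 : (MonoidAlgebra.single w (z w) : A2) = 2 * MonoidAlgebra.single w c := by
      rw [hc, two_mul, two_mul]
      exact MonoidAlgebra.single_add w c c
    rw [h2]
    exact AddSubgroup.subset_closure (Or.inr ⟨MonoidAlgebra.single w c, rfl⟩)
  · push_neg at hbad
    obtain ⟨h3, hxy, hyx⟩ := hbad
    have hof : (MonoidAlgebra.single w (z w) : A2) = (z w) • (MonoidAlgebra.of ℤ FW w) := by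
      rw [MonoidAlgebra.of_apply, MonoidAlgebra.smul_single', mul_one]
    rw [hof]
    apply AddSubgroup.zsmul_mem
    apply AddSubgroup.subset_closure
    rcases lt_or_ge w.length 5 with h5 | h5
    · exact Or.inl (Or.inl ⟨w, by omega, hxy, hyx, rfl⟩)
    · exact Or.inl (Or.inr ⟨w, h5, rfl⟩)

/-- Coordinate 1 of everything in `XA 2 A2` lies in `Qsub`. -/
lemma XA_coord_one {u : ℕ → A2} (hu : u ∈ XA 2 A2) : u 1 ∈ Qsub := by
  set K : AddSubgroup (ℕ → A2) := Qsub.comap (Pi.evalAddMonoidHom (fun _ : ℕ => A2) 1) with hK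
  have hKclosed : IsClosed (K : Set (ℕ → A2)) := by
    have : (K : Set (ℕ → A2)) = (fun z : ℕ → A2 => z 1) ⁻¹' (Qsub : Set A2) := rfl
    rw [this]
    exact (isClosed_discrete _).preimage (continuous_apply 1)
  have hle : AddSubgroup.closure (XAgen 2 A2) ≤ K := by
    rw [AddSubgroup.closure_le]
    rintro z ⟨m, l, -, rfl⟩
    show ((Vb 2)^[m] ((l.map (tm 2)).prod)) 1 ∈ Qsub
    match m with
    | 0 =>
      simp only [Function.iterate_zero, id_eq]
      rw [Pi.list_prod_apply, List.map_map]
      have : (l.map ((fun f : ℕ → A2 => f 1) ∘ tm 2)) = l.map (fun a => a * a) := by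
        apply List.map_congr_left
        intro a _
        show tm 2 a 1 = a * a
        simp [tm, pow_two]
      rw [this]
      exact prod_sq_mem_Qsub l
    | m + 1 =>
      rw [Function.iterate_succ_apply']
      show (2 : ℕ) * ((Vb 2)^[m] ((l.map (tm 2)).prod)) 0 ∈ Qsub
      have : ((2 : ℕ) : A2) = (2 : A2) := by norm_num
      rw [this]
      exact two_mul_mem_Qsub _
  exact AddSubgroup.topologicalClosure_minimal _ hle hKclosed hu

/-- for `A = ℤ⟨X,Y⟩` and `p = 2`, if `(x₀,x₁,x₂,...)` lies in the topological
closure of `[X(A),X(A)]`, then `x₁ ∈ H = A₄⁰ + F⁵A + 2A`. -/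
theorem stmt10 (x : ℕ → A2)
    (hx : x ∈ closure ((AddSubgroup.closure (commXA 2 A2) : AddSubgroup (ℕ → A2)) :
      Set (ℕ → A2))) :
    x 1 ∈ Hsub := by
  have h1 : x 1 ∈ closure ((fun z : ℕ → A2 => z 1) ''
      ((AddSubgroup.closure (commXA 2 A2) : AddSubgroup (ℕ → A2)) : Set (ℕ → A2))) :=
    image_closure_subset_closure_image (continuous_apply 1) ⟨x, hx, rfl⟩
  rw [(isClosed_discrete _).closure_eq] at h1
  obtain ⟨z, hz, hz1⟩ := h1
  have hle : AddSubgroup.closure (commXA 2 A2) ≤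
      Hp.comap (Pi.evalAddMonoidHom (fun _ : ℕ => A2) 1) := by
    rw [AddSubgroup.closure_le]
    rintro c ⟨u, hu, v, hv, rfl⟩
    show (u * v - v * u) 1 ∈ Hp
    have : (u * v - v * u) 1 = u 1 * v 1 - v 1 * u 1 := rfl
    rw [this]
    exact comm_mem_Hp (XA_coord_one hu) (XA_coord_one hv)
  rw [← hz1]
  exact Hp_le_Hsub (hle hz)
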